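/- arXiv:1912.00653 — 3 statements merged into one kernel-verified Lean document; each statement's English description precedes it below -/
import Mathlib

section
/- Let X ⊂ ℝ^d be a nonempty finite cluster, C ⊂ ℝ^d a nonempty finite set of centers with Φ(X,C) = ∑_{p∈X} Φ(p,C) > 0, and let z be a random point of X sampled according to a distribution q with q(x) ≤ ((1+ε₂)/(1-ε₁))·Φ(x,C)/Φ(X,C) for all x ∈ X. Then E[∑_{p∈X} min(Φ(p,C), ||p-z||²)] ≤ (8(1+ε₂)/(1-ε₁))·OPT₁(X). -/
theorem noisy_d2_sampling (d : ℕ) (X C : Finset (EuclideanSpace ℝ (Fin d)))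
    (hX : X.Nonempty) (hC : C.Nonempty) (ε₁ ε₂ : ℝ)
    (hε₁ : 0 ≤ ε₁) (hε₁' : ε₁ < 1) (hε₂ : 0 ≤ ε₂)
    (hΦpos : 0 < ∑ p ∈ X, (C.inf' hC fun c => ‖p - c‖ ^ 2))
    (q : EuclideanSpace ℝ (Fin d) → ℝ)
    (hq0 : ∀ x ∈ X, 0 ≤ q x) (hqsum : ∑ x ∈ X, q x = 1)
    (hqub : ∀ x ∈ X, q x ≤ ((1 + ε₂) / (1 - ε₁)) *
      (C.inf' hC fun c => ‖x - c‖ ^ 2) /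
        ∑ p ∈ X, (C.inf' hC fun c => ‖p - c‖ ^ 2)) :
    ∑ z ∈ X, q z *
        ∑ p ∈ X, min (C.inf' hC fun c => ‖p - c‖ ^ 2) (‖p - z‖ ^ 2) ≤
      (8 * (1 + ε₂) / (1 - ε₁)) *
        ∑ p ∈ X, ‖p - ((X.card : ℝ)⁻¹ • ∑ y ∈ X, y)‖ ^ 2 := by
  classical
  set Φ : EuclideanSpace ℝ (Fin d) → ℝ := fun p => C.inf' hC fun c => ‖p - c‖ ^ 2 with hΦdef
  set μ : EuclideanSpace ℝ (Fin d) := (X.card : ℝ)⁻¹ • ∑ y ∈ X, y with hμdef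
  set ΦX : ℝ := ∑ p ∈ X, Φ p with hΦXdef
  have hn0 : 0 < (X.card : ℝ) := by exact_mod_cast Finset.card_pos.mpr hX
  have hΦnn : ∀ p, 0 ≤ Φ p := fun p => Finset.le_inf' hC _ (fun c _ => sq_nonneg _)
  have hα : 0 ≤ (1 + ε₂) / (1 - ε₁) := div_nonneg (by linarith) (by linarith)
  -- sum of deviations from mean is zero
  have hsum0 : ∑ z ∈ X, (z - μ) = 0 := by
    rw [Finset.sum_sub_distrib, Finset.sum_const, ← Nat.cast_smul_eq_nsmul ℝ, hμdef,
      smul_smul, mul_inv_cancel₀ (ne_of_gt hn0), one_smul, sub_self]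
  -- bias-variance identity
  have keyA : ∑ z ∈ X, ∑ p ∈ X, ‖z - p‖ ^ 2
      = 2 * (X.card : ℝ) * ∑ p ∈ X, ‖p - μ‖ ^ 2 := by
    have expand : ∀ z p : EuclideanSpace ℝ (Fin d),
        ‖z - p‖ ^ 2 = ‖z - μ‖ ^ 2 - 2 * inner ℝ (z - μ) (p - μ) + ‖p - μ‖ ^ 2 := by
      intro z p
      have h : z - p = (z - μ) - (p - μ) := by abel
      rw [h, @norm_sub_sq_real]
    have cross : ∑ z ∈ X, ∑ p ∈ X, (inner ℝ (z - μ) (p - μ) : ℝ) = 0 := by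
      have : ∀ z ∈ X, ∑ p ∈ X, (inner ℝ (z - μ) (p - μ) : ℝ) = 0 := by
        intro z _
        rw [← inner_sum, hsum0, inner_zero_right]
      rw [Finset.sum_congr rfl this, Finset.sum_const, smul_zero]
    calc ∑ z ∈ X, ∑ p ∈ X, ‖z - p‖ ^ 2
        = ∑ z ∈ X, ∑ p ∈ X, (‖z - μ‖ ^ 2 - 2 * inner ℝ (z - μ) (p - μ) + ‖p - μ‖ ^ 2) := by
          refine Finset.sum_congr rfl fun z _ => Finset.sum_congr rfl fun p _ => expand z p
      _ = (∑ z ∈ X, ∑ p ∈ X, ‖z - μ‖ ^ 2)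
          - 2 * (∑ z ∈ X, ∑ p ∈ X, (inner ℝ (z - μ) (p - μ) : ℝ))
          + ∑ z ∈ X, ∑ p ∈ X, ‖p - μ‖ ^ 2 := by
          simp [Finset.sum_add_distrib, Finset.sum_sub_distrib, Finset.mul_sum]
      _ = 2 * (X.card : ℝ) * ∑ p ∈ X, ‖p - μ‖ ^ 2 := by
          rw [cross]
          rw [Finset.sum_comm (f := fun z p => ‖p - μ‖ ^ 2)]
          simp only [Finset.sum_const, nsmul_eq_mul, ← Finset.mul_sum]
          ring
  -- pointwise bound on Φ z
  have keyB : ∀ z ∈ X, (X.card : ℝ) * Φ z ≤ 2 * (∑ p ∈ X, ‖z - p‖ ^ 2) + 2 * ΦX := by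
    intro z hz
    have h : ∀ p ∈ X, Φ z ≤ 2 * ‖z - p‖ ^ 2 + 2 * Φ p := by
      intro p hp
      obtain ⟨c, hc, hcp⟩ := Finset.exists_mem_eq_inf' hC (fun c => ‖p - c‖ ^ 2)
      have h1 : Φ z ≤ ‖z - c‖ ^ 2 := Finset.inf'_le _ hc
      have h2 : ‖z - c‖ ≤ ‖z - p‖ + ‖p - c‖ := by
        have h3 : z - c = (z - p) + (p - c) := by abel
        rw [h3]; exact norm_add_le _ _
      have h4 : ‖z - c‖ ^ 2 ≤ 2 * ‖z - p‖ ^ 2 + 2 * ‖p - c‖ ^ 2 := by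
        nlinarith [sq_nonneg (‖z - p‖ - ‖p - c‖), norm_nonneg (z - c),
          mul_self_le_mul_self (norm_nonneg (z - c)) h2]
      have h5 : Φ p = ‖p - c‖ ^ 2 := hcp
      linarith
    calc (X.card : ℝ) * Φ z = ∑ _p ∈ X, Φ z := by rw [Finset.sum_const, nsmul_eq_mul]
      _ ≤ ∑ p ∈ X, (2 * ‖z - p‖ ^ 2 + 2 * Φ p) := Finset.sum_le_sum h
      _ = 2 * (∑ p ∈ X, ‖z - p‖ ^ 2) + 2 * ΦX := by
          rw [Finset.sum_add_distrib, ← Finset.mul_sum, ← Finset.mul_sum]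
  -- potential times min-sum bound
  have keyC : ∀ z ∈ X, Φ z * (∑ p ∈ X, min (Φ p) (‖p - z‖ ^ 2))
      ≤ (4 / (X.card : ℝ)) * ΦX * ∑ p ∈ X, ‖z - p‖ ^ 2 := by
    intro z hz
    set A : ℝ := (2 / (X.card : ℝ)) * ∑ p ∈ X, ‖z - p‖ ^ 2 with hA
    set B : ℝ := (2 / (X.card : ℝ)) * ΦX with hB
    have hTnn : 0 ≤ ∑ p ∈ X, ‖z - p‖ ^ 2 := Finset.sum_nonneg fun p _ => sq_nonneg _
    have hΦXnn : 0 ≤ ΦX := Finset.sum_nonneg fun p _ => hΦnn p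
    have hAnn : 0 ≤ A := by positivity
    have hBnn : 0 ≤ B := by positivity
    have hΦzAB : Φ z ≤ A + B := by
      have := keyB z hz
      rw [hA, hB]
      rw [div_mul_eq_mul_div, div_mul_eq_mul_div, ← add_div, le_div_iff₀ hn0]
      nlinarith
    have hmin : ∀ p ∈ X, Φ z * min (Φ p) (‖p - z‖ ^ 2) ≤ A * Φ p + B * ‖z - p‖ ^ 2 := by
      intro p hp
      have hmnn : 0 ≤ min (Φ p) (‖p - z‖ ^ 2) := le_min (hΦnn p) (sq_nonneg _)
      have hrev : ‖p - z‖ = ‖z - p‖ := norm_sub_rev p z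
      have h1 : Φ z * min (Φ p) (‖p - z‖ ^ 2) ≤ (A + B) * min (Φ p) (‖p - z‖ ^ 2) :=
        mul_le_mul_of_nonneg_right hΦzAB hmnn
      have h2 : A * min (Φ p) (‖p - z‖ ^ 2) ≤ A * Φ p :=
        mul_le_mul_of_nonneg_left (min_le_left _ _) hAnn
      have h3 : B * min (Φ p) (‖p - z‖ ^ 2) ≤ B * ‖z - p‖ ^ 2 := by
        rw [← hrev]; exact mul_le_mul_of_nonneg_left (min_le_right _ _) hBnn
      nlinarith
    calc Φ z * (∑ p ∈ X, min (Φ p) (‖p - z‖ ^ 2))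
        = ∑ p ∈ X, Φ z * min (Φ p) (‖p - z‖ ^ 2) := Finset.mul_sum _ _ _
      _ ≤ ∑ p ∈ X, (A * Φ p + B * ‖z - p‖ ^ 2) := Finset.sum_le_sum hmin
      _ = A * ΦX + B * ∑ p ∈ X, ‖z - p‖ ^ 2 := by
          rw [Finset.sum_add_distrib, ← Finset.mul_sum, ← Finset.mul_sum]
      _ ≤ (4 / (X.card : ℝ)) * ΦX * ∑ p ∈ X, ‖z - p‖ ^ 2 := by
          rw [hA, hB]
          have : (2 / (X.card : ℝ)) * (∑ p ∈ X, ‖z - p‖ ^ 2) * ΦX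
              + (2 / (X.card : ℝ)) * ΦX * (∑ p ∈ X, ‖z - p‖ ^ 2)
              = (4 / (X.card : ℝ)) * ΦX * ∑ p ∈ X, ‖z - p‖ ^ 2 := by ring
          linarith [this.le]
  -- combine
  have step1 : ∑ z ∈ X, q z * ∑ p ∈ X, min (Φ p) (‖p - z‖ ^ 2)
      ≤ ∑ z ∈ X, ((1 + ε₂) / (1 - ε₁) * Φ z / ΦX) * ∑ p ∈ X, min (Φ p) (‖p - z‖ ^ 2) := by
    refine Finset.sum_le_sum fun z hz => ?_
    have hSnn : 0 ≤ ∑ p ∈ X, min (Φ p) (‖p - z‖ ^ 2) :=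
      Finset.sum_nonneg fun p _ => le_min (hΦnn p) (sq_nonneg _)
    exact mul_le_mul_of_nonneg_right (hqub z hz) hSnn
  have step2 : ∑ z ∈ X, ((1 + ε₂) / (1 - ε₁) * Φ z / ΦX) * ∑ p ∈ X, min (Φ p) (‖p - z‖ ^ 2)
      ≤ ((1 + ε₂) / (1 - ε₁) / ΦX) * ∑ z ∈ X, ((4 / (X.card : ℝ)) * ΦX * ∑ p ∈ X, ‖z - p‖ ^ 2) := by
    rw [Finset.mul_sum]
    refine Finset.sum_le_sum fun z hz => ?_
    have h := keyC z hz
    have hc : (1 + ε₂) / (1 - ε₁) * Φ z / ΦX * ∑ p ∈ X, min (Φ p) (‖p - z‖ ^ 2)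
        = ((1 + ε₂) / (1 - ε₁) / ΦX) * (Φ z * ∑ p ∈ X, min (Φ p) (‖p - z‖ ^ 2)) := by ring
    rw [hc]
    have hcoef : 0 ≤ (1 + ε₂) / (1 - ε₁) / ΦX := div_nonneg hα hΦpos.le
    exact mul_le_mul_of_nonneg_left h hcoef
  have step3 : ((1 + ε₂) / (1 - ε₁) / ΦX) * ∑ z ∈ X, ((4 / (X.card : ℝ)) * ΦX * ∑ p ∈ X, ‖z - p‖ ^ 2)
      = (8 * (1 + ε₂) / (1 - ε₁)) * ∑ p ∈ X, ‖p - μ‖ ^ 2 := by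
    have : ∑ z ∈ X, ((4 / (X.card : ℝ)) * ΦX * ∑ p ∈ X, ‖z - p‖ ^ 2)
        = (4 / (X.card : ℝ)) * ΦX * ∑ z ∈ X, ∑ p ∈ X, ‖z - p‖ ^ 2 := by
      rw [← Finset.mul_sum]
    rw [this, keyA]
    set T : ℝ := ∑ p ∈ X, ‖p - μ‖ ^ 2 with hT
    have key : (1 + ε₂) / (1 - ε₁) / ΦX * (4 / (X.card : ℝ) * ΦX * (2 * (X.card : ℝ) * T))
        = (8 * (1 + ε₂) / (1 - ε₁)) * T * (ΦX / ΦX) * ((X.card : ℝ) / (X.card : ℝ)) := by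
      ring
    rw [key, div_self (ne_of_gt hΦpos), div_self (ne_of_gt hn0), mul_one, mul_one]
  calc ∑ z ∈ X, q z * ∑ p ∈ X, min (Φ p) (‖p - z‖ ^ 2)
      ≤ ∑ z ∈ X, ((1 + ε₂) / (1 - ε₁) * Φ z / ΦX) * ∑ p ∈ X, min (Φ p) (‖p - z‖ ^ 2) := step1
    _ ≤ ((1 + ε₂) / (1 - ε₁) / ΦX) * ∑ z ∈ X, ((4 / (X.card : ℝ)) * ΦX * ∑ p ∈ X, ‖z - p‖ ^ 2) := step2
    _ = (8 * (1 + ε₂) / (1 - ε₁)) * ∑ p ∈ X, ‖p - μ‖ ^ 2 := step3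
end

section
/- Consider the instance X ⊂ ℝ^k consisting of k copies of each unit vector v_1,…,v_{k-1}, (k-1) copies of v_k, and one copy of o = (1/k,…,1/k). The clustering whose clusters are the points at v_1,…,v_{k-1} (each cluster costing 0) together with the cluster {(k-1) copies of v_k, o} has k-means cost at most (k-1)/k, hence OPT_k(X) ≤ (k-1)/k. -/
lemma single_inj (k : ℕ) : Function.Injective
    (fun i : Fin k => EuclideanSpace.single i (1 : ℝ)) := by
  intro i j h
  by_contra hij
  have := congrArg (fun v => v i) h
  simp [EuclideanSpace.single_apply, Ne.symm hij] at this

theorem lower_bound_instance_opt (k : ℕ) (hk : 2 ≤ k) :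
    ∃ (C : Finset (EuclideanSpace ℝ (Fin k))) (hC : C.Nonempty),
      C.card = k ∧
      Multiset.sum
        (Multiset.map (fun x => C.inf' hC fun c => ‖x - c‖ ^ 2)
          ((((Finset.univ : Finset (Fin k)).val.bind fun i : Fin k =>
              Multiset.replicate (if (i : ℕ) = k - 1 then k - 1 else k)
                (EuclideanSpace.single i (1 : ℝ))) +
            {((EuclideanSpace.equiv (Fin k) ℝ).symm fun _ => 1 / (k : ℝ))}))) ≤
        ((k : ℝ) - 1) / k := by
  classical
  have hk0 : (0 : ℕ) < k := by omega
  have hkR : (0 : ℝ) < (k : ℝ) := by exact_mod_cast hk0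
  haveI : NeZero k := ⟨by omega⟩
  set C : Finset (EuclideanSpace ℝ (Fin k)) :=
    Finset.image (fun i : Fin k => EuclideanSpace.single i (1 : ℝ)) Finset.univ with hCdef
  have hC : C.Nonempty := by
    refine ⟨EuclideanSpace.single (⟨0, hk0⟩ : Fin k) (1 : ℝ), ?_⟩
    simp [hCdef]
  refine ⟨C, hC, ?_, ?_⟩
  · rw [hCdef, Finset.card_image_of_injective _ (single_inj k)]
    simp
  set f : EuclideanSpace ℝ (Fin k) → ℝ := fun x => C.inf' hC fun c => ‖x - c‖ ^ 2 with hf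
  have hf0 : ∀ i : Fin k, f (EuclideanSpace.single i (1 : ℝ)) = 0 := by
    intro i
    apply le_antisymm
    · have hmem : EuclideanSpace.single i (1 : ℝ) ∈ C := by simp [hCdef]
      calc f (EuclideanSpace.single i (1 : ℝ)) ≤
          ‖EuclideanSpace.single i (1 : ℝ) - EuclideanSpace.single i (1 : ℝ)‖ ^ 2 :=
          Finset.inf'_le _ hmem
        _ = 0 := by simp
    · exact Finset.le_inf' hC _ fun c _ => sq_nonneg _
  rw [Multiset.map_add, Multiset.sum_add]
  have h1 : (Multiset.map f ((Finset.univ : Finset (Fin k)).val.bind fun i : Fin k =>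
      Multiset.replicate (if (i : ℕ) = k - 1 then k - 1 else k)
        (EuclideanSpace.single i (1 : ℝ)))).sum = 0 := by
    apply Multiset.sum_eq_zero
    intro x hx
    rw [Multiset.mem_map] at hx
    obtain ⟨y, hy, rfl⟩ := hx
    rw [Multiset.mem_bind] at hy
    obtain ⟨i, _, hy⟩ := hy
    rw [Multiset.eq_of_mem_replicate hy]
    exact hf0 i
  rw [h1, zero_add]
  have h2 : (Multiset.map f
      ({((EuclideanSpace.equiv (Fin k) ℝ).symm fun _ => 1 / (k : ℝ))} :
        Multiset (EuclideanSpace ℝ (Fin k)))).sum =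
      f ((EuclideanSpace.equiv (Fin k) ℝ).symm fun _ => 1 / (k : ℝ)) := by
    simp
  rw [h2]
  set o : EuclideanSpace ℝ (Fin k) := (EuclideanSpace.equiv (Fin k) ℝ).symm fun _ => 1 / (k : ℝ)
  set j : Fin k := ⟨k - 1, by omega⟩
  have hmem : EuclideanSpace.single j (1 : ℝ) ∈ C := by simp [hCdef]
  have step : f o ≤ ‖o - EuclideanSpace.single j (1 : ℝ)‖ ^ 2 := Finset.inf'_le _ hmem
  refine step.trans ?_
  have hnorm : ‖o - EuclideanSpace.single j (1 : ℝ)‖ ^ 2 =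
      ∑ i : Fin k, (o i - (EuclideanSpace.single j (1 : ℝ)) i) ^ 2 := by
    rw [EuclideanSpace.norm_eq, Real.sq_sqrt (by positivity)]
    congr 1
    ext i
    simp [Real.norm_eq_abs, sq_abs]
  rw [hnorm]
  have ho : ∀ i : Fin k, o i = 1 / (k : ℝ) := fun i => rfl
  rw [Finset.sum_eq_add_sum_sdiff_singleton_of_mem (Finset.mem_univ j)
    (fun i => (o i - (EuclideanSpace.single j (1 : ℝ)) i) ^ 2)]
  have hterm : (o j - (EuclideanSpace.single j (1 : ℝ)) j) ^ 2 = (1 / (k : ℝ) - 1) ^ 2 := by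
    simp [ho, EuclideanSpace.single_apply]
  have hrest : ∑ i ∈ Finset.univ \ {j}, (o i - (EuclideanSpace.single j (1 : ℝ)) i) ^ 2 =
      ((k : ℝ) - 1) * (1 / (k : ℝ)) ^ 2 := by
    rw [Finset.sum_congr rfl (fun i hi => ?_), Finset.sum_const, nsmul_eq_mul]
    · congr 1
      rw [Finset.card_sdiff_of_subset (by simp)]
      simp
      push_cast [Nat.cast_sub hk0]
      ring
    · rw [Finset.mem_sdiff, Finset.mem_singleton] at hi
      simp [ho, EuclideanSpace.single_apply, hi.2]
  rw [hterm, hrest]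
  have : (1 / (k : ℝ) - 1) ^ 2 + ((k : ℝ) - 1) * (1 / (k : ℝ)) ^ 2 = ((k : ℝ) - 1) / k := by
    field_simp
    ring
  rw [this]
end

section
/- Consider the instance X ⊂ ℝ^k consisting of k copies of each of v_1,…,v_{k-1}, (k-1) copies of v_k, and one copy of o = (1/k,…,1/k). Any set C of k centers from X that contains the point o has k-means cost Φ(X,C) ≥ (k-1)²/k. -/
open Classical in
theorem lower_bound_instance_center_at_o (k : ℕ) (hk : 2 ≤ k)
    (X : Multiset (EuclideanSpace ℝ (Fin k)))
    (hX : X = (((Finset.univ : Finset (Fin k)).val.bind fun i : Fin k =>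
        Multiset.replicate (if (i : ℕ) = k - 1 then k - 1 else k)
          (EuclideanSpace.single i (1 : ℝ))) +
      {((EuclideanSpace.equiv (Fin k) ℝ).symm fun _ => 1 / (k : ℝ))}))
    (C : Finset (EuclideanSpace ℝ (Fin k))) (hC : C.Nonempty)
    (hCX : C ⊆ X.toFinset) (hCcard : C.card = k)
    (hoC : ((EuclideanSpace.equiv (Fin k) ℝ).symm fun _ => 1 / (k : ℝ)) ∈ C) :
    ((k : ℝ) - 1) ^ 2 / k ≤
      (X.map (fun x => C.inf' hC fun c => ‖x - c‖ ^ 2)).sum := by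
  have hk0 : (0:ℝ) < (k:ℝ) := by positivity
  have hk2 : (2:ℝ) ≤ (k:ℝ) := by exact_mod_cast hk
  have hcast : ((k-1 : ℕ):ℝ) = (k:ℝ) - 1 := by
    have h1 : (1:ℕ) ≤ k := by omega
    push_cast [h1]; ring
  set e : Fin k → EuclideanSpace ℝ (Fin k) := fun i => EuclideanSpace.single i (1:ℝ) with he
  set o : EuclideanSpace ℝ (Fin k) := (EuclideanSpace.equiv (Fin k) ℝ).symm fun _ => 1/(k:ℝ) with ho
  have hoj : ∀ j, o j = 1/(k:ℝ) := fun j => rfl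
  have hej : ∀ i j, e i j = if j = i then (1:ℝ) else 0 := fun i j => EuclideanSpace.single_apply i 1 j
  have hnormsq : ∀ x : EuclideanSpace ℝ (Fin k), ‖x‖^2 = ∑ i, (x i)^2 := by
    intro x
    rw [EuclideanSpace.norm_eq, Real.sq_sqrt (by positivity)]
    simp [Real.norm_eq_abs, sq_abs]
  have hmemX : ∀ x ∈ X, x = o ∨ ∃ i, x = e i := by
    subst hX
    intro x hx
    rcases Multiset.mem_add.1 hx with h | h
    · right
      rcases Multiset.mem_bind.1 h with ⟨i, _, hi⟩
      exact ⟨i, (Multiset.eq_of_mem_replicate hi)⟩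
    · left; simpa using h
  have heinj : Function.Injective e := by
    intro i j h
    by_contra hij
    have h2 : e i i = e j i := by rw [h]
    rw [hej, hej, if_pos rfl, if_neg hij] at h2
    exact one_ne_zero h2
  have honee : ∀ i, o ≠ e i := by
    intro i h
    have h2 : o i = e i i := by rw [h]
    rw [hoj, hej, if_pos rfl] at h2
    rw [div_eq_one_iff_eq hk0.ne'] at h2
    rw [← h2] at hk2
    linarith
  have hmiss : ∃ j, e j ∉ C := by
    by_contra h
    push_neg at h
    have hsub : insert o (Finset.image e Finset.univ) ⊆ C := by
      intro x hx
      rcases Finset.mem_insert.1 hx with rfl | hx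
      · exact hoC
      · rcases Finset.mem_image.1 hx with ⟨i, _, rfl⟩; exact h i
    have hcard : (insert o (Finset.image e Finset.univ)).card = k + 1 := by
      rw [Finset.card_insert_of_notMem (by
        intro hmem
        rcases Finset.mem_image.1 hmem with ⟨i, _, hi⟩
        exact honee i hi.symm)]
      rw [Finset.card_image_of_injective _ heinj]
      simp
    have := Finset.card_le_card hsub
    omega
  obtain ⟨j, hjC⟩ := hmiss
  have hcost : ∀ c ∈ C, ((k:ℝ)-1)/k ≤ ‖e j - c‖^2 := by
    intro c hc
    have hcX := Multiset.mem_toFinset.1 (hCX hc)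
    rcases hmemX c hcX with rfl | ⟨i, rfl⟩
    · have heq : ‖e j - o‖^2 = ((k:ℝ)-1)/k := by
        rw [hnormsq]
        have hsum : ∀ i, ((e j - o) i)^2 = (if i = j then (1 - 1/(k:ℝ))^2 else (1/(k:ℝ))^2) := by
          intro i
          have hv : (e j - o) i = e j i - o i := rfl
          rw [hv, hej, hoj]
          split <;> ring_nf
        rw [Finset.sum_congr rfl (fun i _ => hsum i)]
        rw [← Finset.add_sum_erase Finset.univ _ (Finset.mem_univ j), if_pos rfl]
        rw [Finset.sum_congr rfl (fun i hi => if_neg (Finset.ne_of_mem_erase hi))]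
        rw [Finset.sum_const, Finset.card_erase_of_mem (Finset.mem_univ j), Finset.card_univ,
          Fintype.card_fin, nsmul_eq_mul, hcast]
        field_simp
        ring
      exact heq.ge
    · have hij : i ≠ j := fun h => hjC (h ▸ hc)
      have h1 : (1:ℝ) ≤ ‖e j - e i‖^2 := by
        rw [hnormsq]
        have hjj : ((e j - e i) j)^2 = 1 := by
          have hv : (e j - e i) j = e j j - e i j := rfl
          rw [hv, hej, hej, if_pos rfl, if_neg (Ne.symm hij)]
          norm_num
        calc (1:ℝ) = ((e j - e i) j)^2 := hjj.symm
          _ ≤ ∑ i', ((e j - e i) i')^2 :=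
            Finset.single_le_sum (f := fun i' => ((e j - e i) i')^2)
              (fun i' _ => sq_nonneg _) (Finset.mem_univ j)
      have h2 : ((k:ℝ)-1)/k ≤ 1 := by
        rw [div_le_one hk0]; linarith
      linarith
  have hinf : ((k:ℝ)-1)/k ≤ C.inf' hC fun c => ‖e j - c‖^2 := Finset.le_inf' hC _ hcost
  have hfnonneg : ∀ x : EuclideanSpace ℝ (Fin k), 0 ≤ C.inf' hC fun c => ‖x - c‖^2 := by
    intro x
    exact Finset.le_inf' hC _ (fun c _ => by positivity)
  have hle : Multiset.replicate (k-1) (e j) ≤ X := by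
    rw [hX]
    refine le_trans ?_ (Multiset.le_add_right _ _)
    refine le_trans ?_ (Multiset.le_bind _ (show j ∈ (Finset.univ : Finset (Fin k)).val from Finset.mem_univ j))
    rw [he]
    exact (Multiset.replicate_le_replicate _).2 (by split <;> omega)
  obtain ⟨u, hu⟩ := Multiset.le_iff_exists_add.1 hle
  rw [hu, Multiset.map_add, Multiset.sum_add, Multiset.map_replicate, Multiset.sum_replicate]
  have hu0 : 0 ≤ ((u.map fun x => C.inf' hC fun c => ‖x - c‖ ^ 2)).sum := by
    apply Multiset.sum_nonneg
    intro x hx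
    rcases Multiset.mem_map.1 hx with ⟨y, _, rfl⟩
    exact hfnonneg y
  have hmain : ((k:ℝ)-1)^2/k ≤ (k-1 : ℕ) • (C.inf' hC fun c => ‖e j - c‖ ^ 2) := by
    rw [nsmul_eq_mul, hcast]
    calc ((k:ℝ)-1)^2/k = ((k:ℝ)-1) * (((k:ℝ)-1)/k) := by ring
      _ ≤ ((k:ℝ)-1) * (C.inf' hC fun c => ‖e j - c‖ ^ 2) := by
          apply mul_le_mul_of_nonneg_left hinf
          linarith
  linarith
end
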